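/- Young's integral exists: if x : [0,1] → ℝ is continuous with finite p-variation and y : [0,1] → ℝ is continuous with finite q-variation, where p,q ≥ 1 and 1/p + 1/q > 1, then the Riemann–Stieltjes sums Σ_k x_{t_k}(y_{t_{k+1}} − y_{t_k}) over partitions D of [0,1] converge to a limit as the mesh |D| → 0. -/

import Mathlib

/-- `t` is a finite partition `a = t₀ ≤ t₁ ≤ ⋯ ≤ tₙ = b` of `[a,b]`. -/
def IsPartitionOn (a b : ℝ) (n : ℕ) (t : ℕ → ℝ) : Prop :=
  1 ≤ n ∧ t 0 = a ∧ t n = b ∧ ∀ k < n, t k ≤ t (k + 1)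

/-- The `p`-variation sum of `x` over a partition. -/
noncomputable def varSum (x : ℝ → ℝ) (p : ℝ) (n : ℕ) (t : ℕ → ℝ) : ℝ :=
  ∑ k ∈ Finset.range n, |x (t (k + 1)) - x (t k)| ^ p

/-- `x` has finite `p`-variation on `[a,b]`: the partition sums `Σ |Δx|^p` are
uniformly bounded. -/
def FiniteVarOn (x : ℝ → ℝ) (p a b : ℝ) : Prop :=
  ∃ M : ℝ, ∀ n t, IsPartitionOn a b n t → varSum x p n t ≤ M

noncomputable def RS (x y : ℝ → ℝ) (n : ℕ) (t : ℕ → ℝ) : ℝ :=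
  ∑ k ∈ Finset.range n, x (t k) * (y (t (k + 1)) - y (t k))

lemma yi_mono {a b : ℝ} {n : ℕ} {t : ℕ → ℝ} (h : IsPartitionOn a b n t)
    {j k : ℕ} (hjk : j ≤ k) (hk : k ≤ n) : t j ≤ t k := by
  obtain ⟨-, -, -, hm⟩ := h
  induction k with
  | zero => simp_all
  | succ m ih =>
    rcases Nat.eq_or_lt_of_le hjk with rfl | hlt
    · exact le_rfl
    · exact (ih (Nat.lt_succ_iff.mp hlt) (le_trans (Nat.le_succ m) hk)).trans
        (hm m (Nat.lt_of_lt_of_le (Nat.lt_succ_self m) hk))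

lemma yi_mem {a b : ℝ} {n : ℕ} {t : ℕ → ℝ} (h : IsPartitionOn a b n t)
    {k : ℕ} (hk : k ≤ n) : a ≤ t k ∧ t k ≤ b := by
  refine ⟨h.2.1 ▸ yi_mono h (Nat.zero_le k) hk, h.2.2.1 ▸ yi_mono h hk le_rfl⟩

lemma yi_varSum_nonneg (x : ℝ → ℝ) (p : ℝ) (n : ℕ) (t : ℕ → ℝ) :
    0 ≤ varSum x p n t :=
  Finset.sum_nonneg fun _ _ => Real.rpow_nonneg (abs_nonneg _) p

def glueF (m1 : ℕ) (s1 s2 : ℕ → ℝ) : ℕ → ℝ := fun j => if j ≤ m1 then s1 j else s2 (j - m1)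

lemma yi_glue_part {u w v : ℝ} {m1 m2 : ℕ} {s1 s2 : ℕ → ℝ}
    (h1 : IsPartitionOn u w m1 s1) (h2 : IsPartitionOn w v m2 s2) :
    IsPartitionOn u v (m1 + m2) (glueF m1 s1 s2) := by
  obtain ⟨hm1, h10, h1n, h1m⟩ := h1
  obtain ⟨hm2, h20, h2n, h2m⟩ := h2
  have hval : ∀ k, m1 ≤ k → glueF m1 s1 s2 k = s2 (k - m1) := by
    intro k hk
    rcases Nat.eq_or_lt_of_le hk with rfl | hlt
    · simp [glueF, h1n, h20]
    · simp [glueF, Nat.not_le.mpr hlt, Nat.le_of_lt hlt]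
  refine ⟨le_trans hm1 (Nat.le_add_right _ _), by simpa [glueF] using h10, ?_, ?_⟩
  · rw [hval (m1 + m2) (Nat.le_add_right _ _)]
    simp [h2n]
  · intro k hk
    by_cases hkm : k < m1
    · have : k + 1 ≤ m1 := hkm
      simp only [glueF, if_pos (Nat.le_of_lt hkm), if_pos this]
      exact h1m k hkm
    · push_neg at hkm
      rw [hval k hkm, hval (k + 1) (le_trans hkm (Nat.le_succ k))]
      have : k + 1 - m1 = (k - m1) + 1 := by omega
      rw [this]
      exact h2m (k - m1) (by omega)

lemma yi_glue_varSum (x : ℝ → ℝ) (p : ℝ) {u w v : ℝ} {m1 m2 : ℕ} {s1 s2 : ℕ → ℝ}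
    (h1 : IsPartitionOn u w m1 s1) (h2 : IsPartitionOn w v m2 s2) :
    varSum x p (m1 + m2) (glueF m1 s1 s2) = varSum x p m1 s1 + varSum x p m2 s2 := by
  have hval : ∀ k, m1 ≤ k → glueF m1 s1 s2 k = s2 (k - m1) := by
    intro k hk
    rcases Nat.eq_or_lt_of_le hk with rfl | hlt
    · simp [glueF, h1.2.2.1, h2.2.1]
    · simp [glueF, Nat.not_le.mpr hlt, Nat.le_of_lt hlt]
  unfold varSum
  rw [Finset.sum_range_add]
  congr 1
  · apply Finset.sum_congr rfl
    intro k hk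
    have hk' := Finset.mem_range.mp hk
    simp only [glueF, if_pos (Nat.le_of_lt hk'), if_pos (Nat.succ_le_of_lt hk')]
  · apply Finset.sum_congr rfl
    intro k hk
    rw [hval (m1 + k) (Nat.le_add_right _ _), hval (m1 + k + 1) (by omega)]
    have e1 : m1 + k + 1 - m1 = k + 1 := by omega
    have e2 : m1 + k - m1 = k := by omega
    rw [e1, e2]

def trivP (u v : ℝ) : ℕ → ℝ := fun k => if k = 0 then u else v

lemma yi_trivP {u v : ℝ} (huv : u ≤ v) : IsPartitionOn u v 1 (trivP u v) := by
  refine ⟨le_rfl, rfl, rfl, ?_⟩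
  intro k hk
  interval_cases k
  simpa [trivP] using huv

lemma yi_varSum_le_global {x : ℝ → ℝ} {p M : ℝ}
    (hM : ∀ n t, IsPartitionOn 0 1 n t → varSum x p n t ≤ M)
    {u v : ℝ} {m : ℕ} {s : ℕ → ℝ} (hu : 0 ≤ u) (hv : v ≤ 1)
    (hs : IsPartitionOn u v m s) : varSum x p m s ≤ M := by
  have h1 : IsPartitionOn 0 v (1 + m) (glueF 1 (trivP 0 u) s) :=
    yi_glue_part (yi_trivP hu) hs
  have h2 : IsPartitionOn 0 1 ((1 + m) + 1) (glueF (1 + m) (glueF 1 (trivP 0 u) s) (trivP v 1)) :=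
    yi_glue_part h1 (yi_trivP hv)
  have e2 := yi_glue_varSum x p h1 (yi_trivP hv)
  have e1 := yi_glue_varSum x p (yi_trivP hu) hs
  have := hM _ _ h2
  rw [e2, e1] at this
  have n1 : 0 ≤ varSum x p 1 (trivP 0 u) := yi_varSum_nonneg _ _ _ _
  have n2 : 0 ≤ varSum x p 1 (trivP v 1) := yi_varSum_nonneg _ _ _ _
  linarith

def varSet (x : ℝ → ℝ) (p u v : ℝ) : Set ℝ :=
  {r | ∃ m s, IsPartitionOn u v m s ∧ varSum x p m s = r}

noncomputable def Vsup (x : ℝ → ℝ) (p u v : ℝ) : ℝ := sSup (varSet x p u v)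

lemma yi_varSet_nonempty {x : ℝ → ℝ} {p u v : ℝ} (huv : u ≤ v) :
    (varSet x p u v).Nonempty :=
  ⟨_, 1, trivP u v, yi_trivP huv, rfl⟩

lemma yi_varSet_bdd {x : ℝ → ℝ} {p M : ℝ}
    (hM : ∀ n t, IsPartitionOn 0 1 n t → varSum x p n t ≤ M)
    {u v : ℝ} (hu : 0 ≤ u) (hv : v ≤ 1) : BddAbove (varSet x p u v) := by
  refine ⟨M, ?_⟩
  rintro r ⟨m, s, hs, rfl⟩
  exact yi_varSum_le_global hM hu hv hs

lemma yi_le_Vsup {x : ℝ → ℝ} {p M : ℝ}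
    (hM : ∀ n t, IsPartitionOn 0 1 n t → varSum x p n t ≤ M)
    {u v : ℝ} (hu : 0 ≤ u) (hv : v ≤ 1) {m : ℕ} {s : ℕ → ℝ}
    (hs : IsPartitionOn u v m s) : varSum x p m s ≤ Vsup x p u v :=
  le_csSup (yi_varSet_bdd hM hu hv) ⟨m, s, hs, rfl⟩

lemma yi_Vsup_nonneg {x : ℝ → ℝ} {p M : ℝ}
    (hM : ∀ n t, IsPartitionOn 0 1 n t → varSum x p n t ≤ M)
    {u v : ℝ} (hu : 0 ≤ u) (hv : v ≤ 1) (huv : u ≤ v) : 0 ≤ Vsup x p u v :=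
  le_trans (yi_varSum_nonneg x p 1 (trivP u v)) (yi_le_Vsup hM hu hv (yi_trivP huv))

lemma yi_Vsup_le {x : ℝ → ℝ} {p M : ℝ}
    (hM : ∀ n t, IsPartitionOn 0 1 n t → varSum x p n t ≤ M)
    {u v : ℝ} (hu : 0 ≤ u) (hv : v ≤ 1) (huv : u ≤ v) : Vsup x p u v ≤ M :=
  csSup_le (yi_varSet_nonempty huv) (by rintro r ⟨m, s, hs, rfl⟩; exact yi_varSum_le_global hM hu hv hs)

lemma yi_Vsup_superadd {x : ℝ → ℝ} {p M : ℝ}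
    (hM : ∀ n t, IsPartitionOn 0 1 n t → varSum x p n t ≤ M)
    {u w v : ℝ} (hu : 0 ≤ u) (hv : v ≤ 1) (huw : u ≤ w) (hwv : w ≤ v) :
    Vsup x p u w + Vsup x p w v ≤ Vsup x p u v := by
  have hw0 : 0 ≤ w := le_trans hu huw
  have hw1 : w ≤ v := hwv
  have key : ∀ r1 ∈ varSet x p u w, ∀ r2 ∈ varSet x p w v, r1 + r2 ≤ Vsup x p u v := by
    rintro r1 ⟨m1, s1, hs1, rfl⟩ r2 ⟨m2, s2, hs2, rfl⟩
    rw [← yi_glue_varSum x p hs1 hs2]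
    exact yi_le_Vsup hM hu hv (yi_glue_part hs1 hs2)
  have h1 : Vsup x p u w ≤ Vsup x p u v - Vsup x p w v := by
    apply csSup_le (yi_varSet_nonempty huw)
    intro r1 h1
    have h2 : Vsup x p w v ≤ Vsup x p u v - r1 := by
      apply csSup_le (yi_varSet_nonempty hwv)
      intro r2 h2
      linarith [key r1 h1 r2 h2]
    linarith
  linarith

lemma yi_Vsup_sum_superadd {x : ℝ → ℝ} {p M : ℝ}
    (hM : ∀ n t, IsPartitionOn 0 1 n t → varSum x p n t ≤ M) :
    ∀ (n : ℕ) (b : ℝ) (a : ℝ) (t : ℕ → ℝ), 0 ≤ a → b ≤ 1 → IsPartitionOn a b n t →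
    ∑ k ∈ Finset.range n, Vsup x p (t k) (t (k + 1)) ≤ Vsup x p a b := by
  intro n
  induction n with
  | zero => intro b a t _ _ h; exact absurd h.1 (by omega)
  | succ n ih =>
    intro b a t ha hb h
    obtain ⟨-, h0, hn, hm⟩ := h
    rcases Nat.eq_zero_or_pos n with rfl | hn1
    · simp [h0, hn]
    · have hsub : IsPartitionOn a (t n) n t :=
        ⟨hn1, h0, rfl, fun k hk => hm k (by omega)⟩
      have hfull : IsPartitionOn a b (n + 1) t := ⟨by omega, h0, hn, hm⟩
      have htn1 : a ≤ t n ∧ t n ≤ b := yi_mem hfull (Nat.le_succ n)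
      have hih := ih (t n) a t ha (le_trans htn1.2 hb) hsub
      have hsup := yi_Vsup_superadd hM ha hb htn1.1 htn1.2
      rw [Finset.sum_range_succ, hn]
      linarith

def removeF (i : ℕ) (t : ℕ → ℝ) : ℕ → ℝ := fun k => if k < i then t k else t (k + 1)

lemma yi_remove_part {a b : ℝ} {n i : ℕ} {t : ℕ → ℝ} (h : IsPartitionOn a b n t)
    (h1 : 1 ≤ i) (h2 : i < n) : IsPartitionOn a b (n - 1) (removeF i t) := by
  refine ⟨by omega, ?_, ?_, ?_⟩
  · simp only [removeF]
    rw [if_pos (show 0 < i by omega)]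
    exact h.2.1
  · simp only [removeF]
    rw [if_neg (by omega)]
    have : n - 1 + 1 = n := by omega
    rw [this]; exact h.2.2.1
  · intro k hk
    simp only [removeF]
    by_cases hki : k < i
    · by_cases hki' : k + 1 < i
      · rw [if_pos hki, if_pos hki']; exact yi_mono h (Nat.le_succ k) (by omega)
      · rw [if_pos hki, if_neg hki']; exact yi_mono h (by omega) (by omega)
    · rw [if_neg hki, if_neg (by omega)]; exact yi_mono h (by omega) (by omega)

lemma yi_RS_remove (x y : ℝ → ℝ) {n i : ℕ} (t : ℕ → ℝ) (h1 : 1 ≤ i) (h2 : i < n) :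
    RS x y n t - RS x y (n - 1) (removeF i t)
      = (x (t i) - x (t (i - 1))) * (y (t (i + 1)) - y (t i)) := by
  obtain ⟨j, rfl⟩ : ∃ j, i = j + 1 := ⟨i - 1, by omega⟩
  set f : ℕ → ℝ := fun k => x (t k) * (y (t (k + 1)) - y (t k)) with hf
  set g : ℕ → ℝ := fun k => x (removeF (j + 1) t k) *
    (y (removeF (j + 1) t (k + 1)) - y (removeF (j + 1) t k)) with hg
  have hL : RS x y n t = (∑ k ∈ Finset.range j, f k) + f j + f (j + 1)
      + ∑ k ∈ Finset.Ico (j + 2) n, f k := by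
    rw [RS, Finset.range_eq_Ico, ← Finset.sum_Ico_consecutive _ (by omega : 0 ≤ j + 2) (by omega : j + 2 ≤ n),
      ← Finset.range_eq_Ico, Finset.sum_range_succ, Finset.sum_range_succ]
  have hgf : ∀ k < j, g k = f k := by
    intro k hk
    simp only [hg, hf, removeF, if_pos (by omega : k < j + 1), if_pos (by omega : k + 1 < j + 1)]
  have hgj : g j = x (t j) * (y (t (j + 2)) - y (t j)) := by
    simp only [hg, removeF, if_pos (by omega : j < j + 1), if_neg (by omega : ¬ j + 1 < j + 1)]
  have hgk : ∀ k, j + 1 ≤ k → g k = f (k + 1) := by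
    intro k hk
    simp only [hg, hf, removeF, if_neg (by omega : ¬ k < j + 1), if_neg (by omega : ¬ k + 1 < j + 1)]
  have hR : RS x y (n - 1) (removeF (j + 1) t)
      = (∑ k ∈ Finset.range j, f k) + g j + ∑ k ∈ Finset.Ico (j + 2) n, f k := by
    rw [RS, Finset.range_eq_Ico,
      ← Finset.sum_Ico_consecutive _ (by omega : 0 ≤ j + 1) (by omega : j + 1 ≤ n - 1),
      ← Finset.range_eq_Ico, Finset.sum_range_succ]
    congr 1
    · congr 1
      exact Finset.sum_congr rfl fun k hk => hgf k (Finset.mem_range.mp hk)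
    · rw [Finset.sum_Ico_eq_sum_range, Finset.sum_Ico_eq_sum_range]
      have hcard : n - 1 - (j + 1) = n - (j + 2) := by omega
      rw [hcard]
      apply Finset.sum_congr rfl
      intro k _
      have e := hgk (j + 1 + k) (by omega)
      simp only [hg] at e
      rw [e]
      congr 1
      omega
  rw [hL, hR, hgj]
  simp only [hf]
  have e1 : j + 1 - 1 = j := by omega
  rw [e1]
  ring

lemma yi_pigeonhole {A B : ℝ} (hA : 0 < A) (hB : 0 < B) {n : ℕ} (hn : 2 ≤ n)
    (a c : ℕ → ℝ) (ha : ∀ i, 0 ≤ a i) (hc : ∀ i, 0 ≤ c i)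
    (hsa : ∑ i ∈ Finset.Ico 1 n, a i ≤ A) (hsc : ∑ i ∈ Finset.Ico 1 n, c i ≤ B) :
    ∃ i, 1 ≤ i ∧ i < n ∧ a i ≤ 2 * A / ((n : ℝ) - 1) ∧ c i ≤ 2 * B / ((n : ℝ) - 1) := by
  by_contra hcon
  push_neg at hcon
  have hn1 : (0:ℝ) < (n : ℝ) - 1 := by
    have : (2:ℝ) ≤ (n : ℝ) := by exact_mod_cast hn
    linarith
  have key : ∀ i ∈ Finset.Ico 1 n, 2 / ((n:ℝ) - 1) < a i / A + c i / B := by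
    intro i hi
    obtain ⟨hi1, hi2⟩ := Finset.mem_Ico.mp hi
    rcases lt_or_ge (2 * A / ((n:ℝ) - 1)) (a i) with hlt | hle
    · have h1 : 2 * A < a i * ((n:ℝ) - 1) := by
        rw [div_lt_iff₀ hn1] at hlt; linarith
      have : 2 / ((n:ℝ) - 1) < a i / A := by
        rw [div_lt_div_iff₀ hn1 hA]; linarith
      have h2 : 0 ≤ c i / B := div_nonneg (hc i) hB.le
      linarith
    · have hlt := hcon i hi1 hi2 hle
      have h1 : 2 * B < c i * ((n:ℝ) - 1) := by
        rw [div_lt_iff₀ hn1] at hlt; linarith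
      have : 2 / ((n:ℝ) - 1) < c i / B := by
        rw [div_lt_div_iff₀ hn1 hB]; linarith
      have h2 : 0 ≤ a i / A := div_nonneg (ha i) hA.le
      linarith
  have hsum : ∑ i ∈ Finset.Ico 1 n, (2 / ((n:ℝ) - 1)) <
      ∑ i ∈ Finset.Ico 1 n, (a i / A + c i / B) :=
    Finset.sum_lt_sum_of_nonempty (by rw [Finset.nonempty_Ico]; omega) key
  rw [Finset.sum_const, Nat.card_Ico] at hsum
  have hcast : ((n - 1 : ℕ) : ℝ) = (n : ℝ) - 1 := by
    have : (1:ℝ) ≤ (n:ℝ) := by exact_mod_cast (by omega : 1 ≤ n)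
    push_cast [Nat.cast_sub (by omega : 1 ≤ n)]
    ring
  rw [nsmul_eq_mul, hcast] at hsum
  have h1 : ((n:ℝ) - 1) * (2 / ((n:ℝ) - 1)) = 2 := by field_simp
  rw [h1] at hsum
  rw [Finset.sum_add_distrib, ← Finset.sum_div, ← Finset.sum_div] at hsum
  have h2 : (∑ i ∈ Finset.Ico 1 n, a i) / A ≤ 1 := by
    rw [div_le_one hA]; exact hsa
  have h3 : (∑ i ∈ Finset.Ico 1 n, c i) / B ≤ 1 := by
    rw [div_le_one hB]; exact hsc
  linarith

lemma yi_YL {x y : ℝ → ℝ} {p' q' : ℝ} (hp' : 0 < p') (hq' : 0 < q') {a b A B : ℝ}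
    (hA : 0 < A) (hB : 0 < B)
    (hxA : ∀ m s, IsPartitionOn a b m s → varSum x p' m s ≤ A)
    (hyB : ∀ m s, IsPartitionOn a b m s → varSum y q' m s ≤ B) :
    ∀ n t, IsPartitionOn a b n t →
    |RS x y n t - x a * (y b - y a)| ≤
      (2 * A) ^ (1 / p') * (2 * B) ^ (1 / q')
        * ∑ m ∈ Finset.range (n - 1), ((m : ℝ) + 1) ^ (-(1 / p' + 1 / q')) := by
  intro n
  induction n using Nat.strong_induction_on with
  | _ n ih =>
  intro t ht
  rcases le_or_gt n 1 with hn1 | hn2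
  · have hn : n = 1 := le_antisymm hn1 ht.1
    subst hn
    have : RS x y 1 t = x a * (y b - y a) := by
      simp [RS, ht.2.1, ht.2.2.1]
    simp [this]
  · -- n ≥ 2
    have hn : 2 ≤ n := hn2
    have hnr : (0:ℝ) < (n:ℝ) - 1 := by
      have : (2:ℝ) ≤ (n:ℝ) := by exact_mod_cast hn
      linarith
    set θ := 1 / p' + 1 / q' with hθ
    set C := (2 * A) ^ (1 / p') * (2 * B) ^ (1 / q') with hC
    have hCpos : 0 ≤ C := by
      apply mul_nonneg <;> exact Real.rpow_nonneg (by positivity) _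
    set ax : ℕ → ℝ := fun i => |x (t i) - x (t (i - 1))| ^ p' with hax
    set cy : ℕ → ℝ := fun i => |y (t (i + 1)) - y (t i)| ^ q' with hcy
    have haxn : ∀ i, 0 ≤ ax i := fun i => Real.rpow_nonneg (abs_nonneg _) _
    have hcyn : ∀ i, 0 ≤ cy i := fun i => Real.rpow_nonneg (abs_nonneg _) _
    have hsa : ∑ i ∈ Finset.Ico 1 n, ax i ≤ A := by
      have h1 : ∑ i ∈ Finset.Ico 1 n, ax i
          = ∑ k ∈ Finset.range (n - 1), |x (t (k + 1)) - x (t k)| ^ p' := by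
        rw [Finset.sum_Ico_eq_sum_range]
        apply Finset.sum_congr rfl
        intro k _
        simp only [hax]
        have e1 : 1 + k - 1 = k := by omega
        have e2 : 1 + k = k + 1 := by omega
        rw [e1, e2]
      rw [h1]
      refine le_trans ?_ (hxA n t ht)
      unfold varSum
      apply Finset.sum_le_sum_of_subset_of_nonneg
      · exact Finset.range_subset_range.mpr (by omega)
      · intro i _ _; exact Real.rpow_nonneg (abs_nonneg _) _
    have hsc : ∑ i ∈ Finset.Ico 1 n, cy i ≤ B := by
      refine le_trans ?_ (hyB n t ht)
      unfold varSum
      apply Finset.sum_le_sum_of_subset_of_nonneg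
      · intro i hi; rw [Finset.mem_Ico] at hi; exact Finset.mem_range.mpr hi.2
      · intro i _ _; exact Real.rpow_nonneg (abs_nonneg _) _
    obtain ⟨i, hi1, hi2, hia, hic⟩ := yi_pigeonhole hA hB hn ax cy haxn hcyn hsa hsc
    have hrem := yi_remove_part ht hi1 hi2
    have hdiff := yi_RS_remove x y t hi1 hi2
    have hxb : |x (t i) - x (t (i - 1))| ≤ (2 * A / ((n:ℝ) - 1)) ^ (1 / p') := by
      have h0 : |x (t i) - x (t (i - 1))| = (ax i) ^ (1 / p') := by
        simp only [hax]
        rw [← Real.rpow_mul (abs_nonneg _), mul_one_div, div_self (ne_of_gt hp'),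
          Real.rpow_one]
      rw [h0]
      exact Real.rpow_le_rpow (haxn i) hia (by positivity)
    have hyb : |y (t (i + 1)) - y (t i)| ≤ (2 * B / ((n:ℝ) - 1)) ^ (1 / q') := by
      have h0 : |y (t (i + 1)) - y (t i)| = (cy i) ^ (1 / q') := by
        simp only [hcy]
        rw [← Real.rpow_mul (abs_nonneg _), mul_one_div, div_self (ne_of_gt hq'),
          Real.rpow_one]
      rw [h0]
      exact Real.rpow_le_rpow (hcyn i) hic (by positivity)
    have hbound : |RS x y n t - RS x y (n - 1) (removeF i t)|
        ≤ C * ((n:ℝ) - 1) ^ (-θ) := by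
      rw [hdiff, abs_mul]
      calc |x (t i) - x (t (i - 1))| * |y (t (i + 1)) - y (t i)|
          ≤ (2 * A / ((n:ℝ) - 1)) ^ (1 / p') * (2 * B / ((n:ℝ) - 1)) ^ (1 / q') :=
            mul_le_mul hxb hyb (abs_nonneg _) (Real.rpow_nonneg (by positivity) _)
        _ = C * ((n:ℝ) - 1) ^ (-θ) := by
            rw [Real.div_rpow (by positivity) hnr.le, Real.div_rpow (by positivity) hnr.le,
              div_mul_div_comm, ← Real.rpow_add hnr, div_eq_mul_inv,
              ← Real.rpow_neg hnr.le, hθ, hC, neg_add]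
    have hIH := ih (n - 1) (by omega) (removeF i t) hrem
    have htri : |RS x y n t - x a * (y b - y a)|
        ≤ |RS x y n t - RS x y (n - 1) (removeF i t)|
          + |RS x y (n - 1) (removeF i t) - x a * (y b - y a)| := abs_sub_le _ _ _
    have hsplit : ∑ m ∈ Finset.range (n - 1), ((m:ℝ) + 1) ^ (-θ)
        = (∑ m ∈ Finset.range (n - 1 - 1), ((m:ℝ) + 1) ^ (-θ)) + ((n:ℝ) - 1) ^ (-θ) := by
      have e : n - 1 = (n - 1 - 1) + 1 := by omega
      have e2 : (((n - 1 - 1 : ℕ) : ℝ) + 1) ^ (-θ) = ((n:ℝ) - 1) ^ (-θ) := by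
        congr 1
        push_cast [Nat.cast_sub (show 1 ≤ n - 1 by omega), Nat.cast_sub (show 1 ≤ n by omega)]
        ring
      rw [e, Finset.sum_range_succ, e2, Nat.add_sub_cancel]
    rw [hsplit, mul_add]
    linarith

noncomputable def Zc (θ : ℝ) : ℝ := ∑' m : ℕ, ((m : ℝ) + 1) ^ (-θ)

lemma yi_summable {θ : ℝ} (hθ : 1 < θ) :
    Summable (fun m : ℕ => ((m : ℝ) + 1) ^ (-θ)) := by
  have h1 : Summable (fun n : ℕ => (n : ℝ) ^ (-θ)) :=
    Real.summable_nat_rpow.mpr (by linarith)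
  have h2 := (summable_nat_add_iff 1).mpr h1
  convert h2 using 2 with m
  push_cast
  · rfl
  · norm_num

lemma yi_partial_le_Z {θ : ℝ} (hθ : 1 < θ) (n : ℕ) :
    ∑ m ∈ Finset.range n, ((m : ℝ) + 1) ^ (-θ) ≤ Zc θ :=
  Summable.sum_le_tsum _ (fun m _ => Real.rpow_nonneg (by positivity) _) (yi_summable hθ)

lemma yi_Z_nonneg {θ : ℝ} : 0 ≤ Zc θ :=
  tsum_nonneg fun m => Real.rpow_nonneg (by positivity) _

lemma yi_YL2 {x y : ℝ → ℝ} {p' q' : ℝ} (hp' : 0 < p') (hq' : 0 < q')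
    (hθ : 1 < 1 / p' + 1 / q') {a b A B : ℝ} (hA : 0 ≤ A) (hB : 0 ≤ B)
    (hxA : ∀ m s, IsPartitionOn a b m s → varSum x p' m s ≤ A)
    (hyB : ∀ m s, IsPartitionOn a b m s → varSum y q' m s ≤ B)
    {n : ℕ} {t : ℕ → ℝ} (ht : IsPartitionOn a b n t) :
    |RS x y n t - x a * (y b - y a)| ≤
      (2 * A) ^ (1 / p') * (2 * B) ^ (1 / q') * Zc (1 / p' + 1 / q') := by
  set θ := 1 / p' + 1 / q' with hθdef
  have hstep : ∀ δ : ℝ, 0 < δ →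
      |RS x y n t - x a * (y b - y a)| ≤
        (2 * (A + δ)) ^ (1 / p') * (2 * (B + δ)) ^ (1 / q') * Zc θ := by
    intro δ hδ
    have h1 := yi_YL hp' hq' (by linarith : (0:ℝ) < A + δ) (by linarith : (0:ℝ) < B + δ)
      (fun m s hs => le_trans (hxA m s hs) (by linarith))
      (fun m s hs => le_trans (hyB m s hs) (by linarith)) n t ht
    refine le_trans h1 ?_
    apply mul_le_mul_of_nonneg_left (yi_partial_le_Z hθ (n - 1))
    apply mul_nonneg <;> exact Real.rpow_nonneg (by positivity) _
  have hcont : Filter.Tendsto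
      (fun δ : ℝ => (2 * (A + δ)) ^ (1 / p') * (2 * (B + δ)) ^ (1 / q') * Zc θ)
      (nhdsWithin 0 (Set.Ioi 0))
      (nhds ((2 * A) ^ (1 / p') * (2 * B) ^ (1 / q') * Zc θ)) := by
    have c1 : ContinuousAt (fun δ : ℝ => (2 * (A + δ)) ^ (1 / p')) 0 := by
      have hin : ContinuousAt (fun δ : ℝ => 2 * (A + δ)) 0 := by fun_prop
      exact (Real.continuousAt_rpow_const _ _ (Or.inr (by positivity))).comp hin
    have c2 : ContinuousAt (fun δ : ℝ => (2 * (B + δ)) ^ (1 / q')) 0 := by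
      have hin : ContinuousAt (fun δ : ℝ => 2 * (B + δ)) 0 := by fun_prop
      exact (Real.continuousAt_rpow_const _ _ (Or.inr (by positivity))).comp hin
    have h3 : ContinuousAt
        (fun δ : ℝ => (2 * (A + δ)) ^ (1 / p') * (2 * (B + δ)) ^ (1 / q') * Zc θ) 0 :=
      (c1.mul c2).mul (continuousAt_const : ContinuousAt (fun _ : ℝ => Zc θ) 0)
    have h4 := h3.tendsto
    simp only [add_zero] at h4
    exact h4.mono_left nhdsWithin_le_nhds
  refine ge_of_tendsto hcont ?_
  filter_upwards [self_mem_nhdsWithin] with δ hδ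
  exact hstep δ hδ

lemma yi_holder {ι : Type*} (s : Finset ι) (α β : ℝ) (hα : 0 < α) (hβ : 0 < β)
    (hs : 1 ≤ α + β) (a b : ι → ℝ) (ha : ∀ i ∈ s, 0 ≤ a i) (hb : ∀ i ∈ s, 0 ≤ b i) :
    ∑ i ∈ s, (a i) ^ α * (b i) ^ β ≤ (∑ i ∈ s, a i) ^ α * (∑ i ∈ s, b i) ^ β := by
  set Sa := ∑ i ∈ s, a i with hSa
  set Sb := ∑ i ∈ s, b i with hSb
  have hSa0 : 0 ≤ Sa := Finset.sum_nonneg ha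
  have hSb0 : 0 ≤ Sb := Finset.sum_nonneg hb
  rcases eq_or_lt_of_le hSa0 with hSaz | hSap
  · have hz : ∀ i ∈ s, a i = 0 :=
      (Finset.sum_eq_zero_iff_of_nonneg ha).mp hSaz.symm
    have hL : ∑ i ∈ s, (a i) ^ α * (b i) ^ β = 0 := by
      apply Finset.sum_eq_zero
      intro i hi
      rw [hz i hi, Real.zero_rpow (ne_of_gt hα), zero_mul]
    rw [hL, ← hSaz, Real.zero_rpow (ne_of_gt hα), zero_mul]
  rcases eq_or_lt_of_le hSb0 with hSbz | hSbp
  · have hz : ∀ i ∈ s, b i = 0 :=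
      (Finset.sum_eq_zero_iff_of_nonneg hb).mp hSbz.symm
    have hL : ∑ i ∈ s, (a i) ^ α * (b i) ^ β = 0 := by
      apply Finset.sum_eq_zero
      intro i hi
      rw [hz i hi, Real.zero_rpow (ne_of_gt hβ), mul_zero]
    rw [hL, ← hSbz, Real.zero_rpow (ne_of_gt hβ), mul_zero]
  set σ := α + β with hσ
  have hσ0 : 0 < σ := by positivity
  set K1 := Sa ^ α * Sb ^ β * (α / σ) / Sa with hK1
  set K2 := Sa ^ α * Sb ^ β * (β / σ) / Sb with hK2
  have hK1n : 0 ≤ K1 := by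
    apply div_nonneg _ hSa0
    apply mul_nonneg (mul_nonneg (Real.rpow_nonneg hSa0 _) (Real.rpow_nonneg hSb0 _))
    positivity
  have hK2n : 0 ≤ K2 := by
    apply div_nonneg _ hSb0
    apply mul_nonneg (mul_nonneg (Real.rpow_nonneg hSa0 _) (Real.rpow_nonneg hSb0 _))
    positivity
  have hterm : ∀ i ∈ s, (a i) ^ α * (b i) ^ β ≤ K1 * a i + K2 * b i := by
    intro i hi
    rcases eq_or_lt_of_le (ha i hi) with haz | hap
    · rw [← haz, Real.zero_rpow (ne_of_gt hα), zero_mul, mul_zero, zero_add]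
      exact mul_nonneg hK2n (hb i hi)
    rcases eq_or_lt_of_le (hb i hi) with hbz | hbp
    · rw [← hbz, Real.zero_rpow (ne_of_gt hβ), mul_zero, mul_zero, add_zero]
      exact mul_nonneg hK1n (ha i hi)
    set u := a i / Sa with hu
    set v := b i / Sb with hv
    have hup : 0 < u := div_pos hap hSap
    have hvp : 0 < v := div_pos hbp hSbp
    have hu1 : u ≤ 1 := by
      rw [hu, div_le_one hSap]
      exact Finset.single_le_sum ha hi
    have hv1 : v ≤ 1 := by
      rw [hv, div_le_one hSbp]
      exact Finset.single_le_sum hb hi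
    have hav : a i = Sa * u := by rw [hu]; field_simp
    have hbv : b i = Sb * v := by rw [hv]; field_simp
    have e1 : (a i) ^ α * (b i) ^ β = Sa ^ α * Sb ^ β * (u ^ α * v ^ β) := by
      rw [hav, hbv, Real.mul_rpow hSa0 hup.le, Real.mul_rpow hSb0 hvp.le]
      ring
    have e2 : u ^ α * v ^ β ≤ u ^ (α / σ) * v ^ (β / σ) := by
      apply mul_le_mul
      · exact Real.rpow_le_rpow_of_exponent_ge hup hu1 (div_le_self hα.le hs)
      · exact Real.rpow_le_rpow_of_exponent_ge hvp hv1 (div_le_self hβ.le hs)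
      · exact Real.rpow_nonneg hvp.le _
      · exact Real.rpow_nonneg hup.le _
    have e3 : u ^ (α / σ) * v ^ (β / σ) ≤ (α / σ) * u + (β / σ) * v :=
      Real.geom_mean_le_arith_mean2_weighted (by positivity) (by positivity)
        hup.le hvp.le (by field_simp; exact hσ.symm)
    have e4 : Sa ^ α * Sb ^ β * ((α / σ) * u + (β / σ) * v) = K1 * a i + K2 * b i := by
      rw [hK1, hK2, hu, hv]
      field_simp
    calc (a i) ^ α * (b i) ^ β
        = Sa ^ α * Sb ^ β * (u ^ α * v ^ β) := e1
      _ ≤ Sa ^ α * Sb ^ β * (u ^ (α / σ) * v ^ (β / σ)) := by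
          apply mul_le_mul_of_nonneg_left e2
          exact mul_nonneg (Real.rpow_nonneg hSa0 _) (Real.rpow_nonneg hSb0 _)
      _ ≤ Sa ^ α * Sb ^ β * ((α / σ) * u + (β / σ) * v) := by
          apply mul_le_mul_of_nonneg_left e3
          exact mul_nonneg (Real.rpow_nonneg hSa0 _) (Real.rpow_nonneg hSb0 _)
      _ = K1 * a i + K2 * b i := e4
  calc ∑ i ∈ s, (a i) ^ α * (b i) ^ β
      ≤ ∑ i ∈ s, (K1 * a i + K2 * b i) := Finset.sum_le_sum hterm
    _ = K1 * Sa + K2 * Sb := by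
        rw [Finset.sum_add_distrib, ← Finset.mul_sum, ← Finset.mul_sum]
    _ = Sa ^ α * Sb ^ β := by
        rw [hK1, hK2]
        field_simp
        ring

lemma yi_nat_mono {n : ℕ} {σ : ℕ → ℕ} (h : ∀ k < n, σ k ≤ σ (k + 1)) :
    ∀ j k, j ≤ k → k ≤ n → σ j ≤ σ k := by
  intro j k hjk hk
  induction k with
  | zero => simp_all
  | succ m ih =>
    rcases Nat.eq_or_lt_of_le hjk with rfl | hlt
    · exact le_rfl
    · exact (ih (Nat.lt_succ_iff.mp hlt) (le_trans (Nat.le_succ m) hk)).trans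
        (h m (Nat.lt_of_lt_of_le (Nat.lt_succ_self m) hk))

lemma yi_sum_split (σ : ℕ → ℕ) (f : ℕ → ℝ) (hσ0 : σ 0 = 0) :
    ∀ n, (∀ k < n, σ k ≤ σ (k + 1)) →
    ∑ j ∈ Finset.range (σ n), f j
      = ∑ k ∈ Finset.range n, ∑ j ∈ Finset.Ico (σ k) (σ (k + 1)), f j := by
  intro n
  induction n with
  | zero => simp [hσ0]
  | succ m ih =>
    intro h
    rw [Finset.sum_range_succ, ← ih (fun k hk => h k (by omega)), Finset.range_eq_Ico, Finset.range_eq_Ico]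
    exact (Finset.sum_Ico_consecutive f (Nat.zero_le (σ m)) (h m (by omega))).symm

lemma yi_refine_est {x y : ℝ → ℝ} {p q p' q' Mx My εx εy : ℝ}
    (hp : 0 < p) (hq : 0 < q)
    (hp' : 0 < p') (hq' : 0 < q') (hθ : 1 < 1 / p' + 1 / q')
    (hpp' : p ≤ p') (hqq' : q ≤ q')
    (hMx : ∀ n t, IsPartitionOn 0 1 n t → varSum x p n t ≤ Mx)
    (hMy : ∀ n t, IsPartitionOn 0 1 n t → varSum y q n t ≤ My)
    (hεx : 0 ≤ εx) (hεy : 0 ≤ εy)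
    {n : ℕ} {t : ℕ → ℝ} (ht : IsPartitionOn 0 1 n t)
    (hoscx : ∀ k < n, ∀ u v : ℝ, t k ≤ u → u ≤ t (k + 1) → t k ≤ v → v ≤ t (k + 1) →
      |x u - x v| ≤ εx)
    (hoscy : ∀ k < n, ∀ u v : ℝ, t k ≤ u → u ≤ t (k + 1) → t k ≤ v → v ≤ t (k + 1) →
      |y u - y v| ≤ εy)
    {N : ℕ} {r : ℕ → ℝ} (hr : IsPartitionOn 0 1 N r)
    (σ : ℕ → ℕ) (hσ0 : σ 0 = 0) (hσn : σ n = N) (hσm : ∀ k < n, σ k ≤ σ (k + 1))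
    (hσt : ∀ k ≤ n, r (σ k) = t k) :
    |RS x y N r - RS x y n t| ≤ 2 ^ (1 / p' + 1 / q') * Zc (1 / p' + 1 / q') *
      ((εx ^ (p' - p) * Mx) ^ (1 / p') * (εy ^ (q' - q) * My) ^ (1 / q')) := by
  set θ := 1 / p' + 1 / q' with hθdef
  -- the per-interval sup-variations
  set VA : ℕ → ℝ := fun k => εx ^ (p' - p) * Vsup x p (t k) (t (k + 1)) with hVA
  set VB : ℕ → ℝ := fun k => εy ^ (q' - q) * Vsup y q (t k) (t (k + 1)) with hVB
  have htk : ∀ k ≤ n, 0 ≤ t k ∧ t k ≤ 1 := fun k hk => yi_mem ht hk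
  have htk2 : ∀ k < n, t k ≤ t (k + 1) := fun k hk => ht.2.2.2 k hk
  have hVAn : ∀ k < n, 0 ≤ VA k := by
    intro k hk
    exact mul_nonneg (Real.rpow_nonneg hεx _)
      (yi_Vsup_nonneg hMx (htk k (by omega)).1 (htk (k+1) (by omega)).2 (htk2 k hk))
  have hVBn : ∀ k < n, 0 ≤ VB k := by
    intro k hk
    exact mul_nonneg (Real.rpow_nonneg hεy _)
      (yi_Vsup_nonneg hMy (htk k (by omega)).1 (htk (k+1) (by omega)).2 (htk2 k hk))
  -- per-interval p'-variation bounds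
  have hxA : ∀ k < n, ∀ m s, IsPartitionOn (t k) (t (k + 1)) m s → varSum x p' m s ≤ VA k := by
    intro k hk m s hs
    have h1 : varSum x p' m s ≤ εx ^ (p' - p) * varSum x p m s := by
      unfold varSum
      rw [Finset.mul_sum]
      apply Finset.sum_le_sum
      intro j hj
      have hj' := Finset.mem_range.mp hj
      have hmem1 := yi_mem hs (Nat.le_of_lt hj')
      have hmem2 := yi_mem hs (Nat.succ_le_of_lt hj')
      have hosc : |x (s (j + 1)) - x (s j)| ≤ εx := by
        have h2 : |x (s (j + 1)) - x (s j)| = |x (s (j+1)) - x (s j)| := rfl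
        exact hoscx k hk (s (j+1)) (s j) hmem2.1 hmem2.2 hmem1.1 hmem1.2
      rcases eq_or_lt_of_le (abs_nonneg (x (s (j + 1)) - x (s j))) with hz | hpos
      · rw [← hz, Real.zero_rpow (ne_of_gt hp')]
        exact mul_nonneg (Real.rpow_nonneg hεx _) (Real.rpow_nonneg le_rfl _)
      · have e1 : |x (s (j + 1)) - x (s j)| ^ p'
            = |x (s (j + 1)) - x (s j)| ^ (p' - p) * |x (s (j + 1)) - x (s j)| ^ p := by
          rw [← Real.rpow_add hpos]
          congr 1
          ring
        rw [e1]
        apply mul_le_mul_of_nonneg_right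
        · exact Real.rpow_le_rpow (abs_nonneg _) hosc (by linarith)
        · exact Real.rpow_nonneg (abs_nonneg _) _
    refine le_trans h1 ?_
    rw [hVA]
    apply mul_le_mul_of_nonneg_left _ (Real.rpow_nonneg hεx _)
    exact yi_le_Vsup hMx (htk k (by omega)).1 (htk (k+1) (by omega)).2 hs
  have hyB : ∀ k < n, ∀ m s, IsPartitionOn (t k) (t (k + 1)) m s → varSum y q' m s ≤ VB k := by
    intro k hk m s hs
    have h1 : varSum y q' m s ≤ εy ^ (q' - q) * varSum y q m s := by
      unfold varSum
      rw [Finset.mul_sum]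
      apply Finset.sum_le_sum
      intro j hj
      have hj' := Finset.mem_range.mp hj
      have hmem1 := yi_mem hs (Nat.le_of_lt hj')
      have hmem2 := yi_mem hs (Nat.succ_le_of_lt hj')
      have hosc : |y (s (j + 1)) - y (s j)| ≤ εy :=
        hoscy k hk (s (j+1)) (s j) hmem2.1 hmem2.2 hmem1.1 hmem1.2
      rcases eq_or_lt_of_le (abs_nonneg (y (s (j + 1)) - y (s j))) with hz | hpos
      · rw [← hz, Real.zero_rpow (ne_of_gt hq')]
        exact mul_nonneg (Real.rpow_nonneg hεy _) (Real.rpow_nonneg le_rfl _)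
      · have e1 : |y (s (j + 1)) - y (s j)| ^ q'
            = |y (s (j + 1)) - y (s j)| ^ (q' - q) * |y (s (j + 1)) - y (s j)| ^ q := by
          rw [← Real.rpow_add hpos]
          congr 1
          ring
        rw [e1]
        apply mul_le_mul_of_nonneg_right
        · exact Real.rpow_le_rpow (abs_nonneg _) hosc (by linarith)
        · exact Real.rpow_nonneg (abs_nonneg _) _
    refine le_trans h1 ?_
    rw [hVB]
    apply mul_le_mul_of_nonneg_left _ (Real.rpow_nonneg hεy _)
    exact yi_le_Vsup hMy (htk k (by omega)).1 (htk (k+1) (by omega)).2 hs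
  -- splitting of the fine sum
  have hsplit : RS x y N r = ∑ k ∈ Finset.range n,
      ∑ j ∈ Finset.Ico (σ k) (σ (k + 1)), x (r j) * (y (r (j + 1)) - y (r j)) := by
    rw [RS, ← hσn]
    exact yi_sum_split σ _ hσ0 n hσm
  -- per-interval estimate
  have hper : ∀ k < n,
      |(∑ j ∈ Finset.Ico (σ k) (σ (k + 1)), x (r j) * (y (r (j + 1)) - y (r j)))
        - x (t k) * (y (t (k + 1)) - y (t k))|
      ≤ (2 * VA k) ^ (1 / p') * (2 * VB k) ^ (1 / q') * Zc θ := by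
    intro k hk
    rcases Nat.eq_or_lt_of_le (hσm k hk) with heq | hlt
    · -- degenerate interval
      have htt : t k = t (k + 1) := by
        rw [← hσt k (by omega), ← hσt (k + 1) (by omega), heq]
      rw [← heq]
      simp only [Finset.Ico_self, Finset.sum_empty, htt, sub_self, mul_zero, zero_sub, abs_neg,
        abs_zero]
      exact mul_nonneg (mul_nonneg (Real.rpow_nonneg (by linarith [hVAn k hk]) _)
        (Real.rpow_nonneg (by linarith [hVBn k hk]) _)) yi_Z_nonneg
    · -- genuine interval: shifted partition
      set m := σ (k + 1) - σ k with hm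
      set sk : ℕ → ℝ := fun j => r (σ k + j) with hsk
      have hσkN : σ (k + 1) ≤ N := hσn ▸ yi_nat_mono hσm (k + 1) n (by omega) le_rfl
      have hpart : IsPartitionOn (t k) (t (k + 1)) m sk := by
        refine ⟨by omega, ?_, ?_, ?_⟩
        · simp only [hsk, Nat.add_zero]
          exact hσt k (by omega)
        · simp only [hsk]
          rw [show σ k + m = σ (k + 1) by omega]
          exact hσt (k + 1) (by omega)
        · intro j hj
          simp only [hsk]
          rw [show σ k + (j + 1) = (σ k + j) + 1 from rfl]
          exact hr.2.2.2 (σ k + j) (by omega)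
      have hRSseg : ∑ j ∈ Finset.Ico (σ k) (σ (k + 1)), x (r j) * (y (r (j + 1)) - y (r j))
          = RS x y m sk := by
        rw [Finset.sum_Ico_eq_sum_range, RS]
        rw [show σ (k + 1) - σ k = m from rfl]
        apply Finset.sum_congr rfl
        intro j _
        simp only [hsk]
        rfl
      rw [hRSseg]
      exact yi_YL2 hp' hq' hθ (hVAn k hk) (hVBn k hk) (hxA k hk) (hyB k hk) hpart
  -- assembling
  have h1 : |RS x y N r - RS x y n t| ≤ ∑ k ∈ Finset.range n,
      ((2 * VA k) ^ (1 / p') * (2 * VB k) ^ (1 / q') * Zc θ) := by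
    rw [hsplit, RS, ← Finset.sum_sub_distrib]
    refine le_trans (Finset.abs_sum_le_sum_abs _ _) ?_
    apply Finset.sum_le_sum
    intro k hk
    exact hper k (Finset.mem_range.mp hk)
  refine le_trans h1 ?_
  have h2 : ∀ k ∈ Finset.range n,
      (2 * VA k) ^ (1 / p') * (2 * VB k) ^ (1 / q') * Zc θ
        = 2 ^ θ * Zc θ * ((VA k) ^ (1 / p') * (VB k) ^ (1 / q')) := by
    intro k hk
    have hk' := Finset.mem_range.mp hk
    rw [Real.mul_rpow (by norm_num) (hVAn k hk'), Real.mul_rpow (by norm_num) (hVBn k hk'),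
      hθdef, Real.rpow_add (by norm_num : (0:ℝ) < 2)]
    ring
  rw [Finset.sum_congr rfl h2, ← Finset.mul_sum]
  have h3 : ∑ k ∈ Finset.range n, (VA k) ^ (1 / p') * (VB k) ^ (1 / q')
      ≤ (∑ k ∈ Finset.range n, VA k) ^ (1 / p') * (∑ k ∈ Finset.range n, VB k) ^ (1 / q') := by
    apply yi_holder _ _ _ (by positivity) (by positivity) (le_of_lt hθ)
    · intro k hk; exact hVAn k (Finset.mem_range.mp hk)
    · intro k hk; exact hVBn k (Finset.mem_range.mp hk)
  have hsumA : ∑ k ∈ Finset.range n, VA k ≤ εx ^ (p' - p) * Mx := by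
    rw [hVA, ← Finset.mul_sum]
    apply mul_le_mul_of_nonneg_left _ (Real.rpow_nonneg hεx _)
    refine le_trans (yi_Vsup_sum_superadd hMx n 1 0 t le_rfl le_rfl ht) ?_
    exact yi_Vsup_le hMx le_rfl le_rfl (by norm_num)
  have hsumB : ∑ k ∈ Finset.range n, VB k ≤ εy ^ (q' - q) * My := by
    rw [hVB, ← Finset.mul_sum]
    apply mul_le_mul_of_nonneg_left _ (Real.rpow_nonneg hεy _)
    refine le_trans (yi_Vsup_sum_superadd hMy n 1 0 t le_rfl le_rfl ht) ?_
    exact yi_Vsup_le hMy le_rfl le_rfl (by norm_num)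
  have hZn : 0 ≤ 2 ^ θ * Zc θ := mul_nonneg (Real.rpow_nonneg (by norm_num) _) yi_Z_nonneg
  refine le_trans (mul_le_mul_of_nonneg_left h3 hZn) ?_
  apply mul_le_mul_of_nonneg_left _ hZn
  apply mul_le_mul
  · exact Real.rpow_le_rpow (Finset.sum_nonneg fun k hk => hVAn k (Finset.mem_range.mp hk))
      hsumA (by positivity)
  · exact Real.rpow_le_rpow (Finset.sum_nonneg fun k hk => hVBn k (Finset.mem_range.mp hk))
      hsumB (by positivity)
  · exact Real.rpow_nonneg (Finset.sum_nonneg fun k hk => hVBn k (Finset.mem_range.mp hk)) _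
  · exact Real.rpow_nonneg (le_trans
      (Finset.sum_nonneg fun k hk => hVAn k (Finset.mem_range.mp hk)) hsumA) _

lemma yi_common_refine {n N : ℕ} {t s : ℕ → ℝ}
    (ht : IsPartitionOn 0 1 n t) (hs : IsPartitionOn 0 1 N s) :
    ∃ (m : ℕ) (r : ℕ → ℝ), IsPartitionOn 0 1 m r ∧
      (∃ σ : ℕ → ℕ, σ 0 = 0 ∧ σ n = m ∧ (∀ k < n, σ k ≤ σ (k + 1)) ∧
        ∀ k ≤ n, r (σ k) = t k) ∧
      (∃ τ : ℕ → ℕ, τ 0 = 0 ∧ τ N = m ∧ (∀ k < N, τ k ≤ τ (k + 1)) ∧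
        ∀ k ≤ N, r (τ k) = s k) := by
  classical
  set F : Finset ℝ := ((Finset.range (n + 1)).image t) ∪ ((Finset.range (N + 1)).image s)
    with hF
  have htF : ∀ k ≤ n, t k ∈ F := fun k hk =>
    Finset.mem_union_left _ (Finset.mem_image.mpr ⟨k, Finset.mem_range.mpr (by omega), rfl⟩)
  have hsF : ∀ k ≤ N, s k ∈ F := fun k hk =>
    Finset.mem_union_right _ (Finset.mem_image.mpr ⟨k, Finset.mem_range.mpr (by omega), rfl⟩)
  have h0F : (0:ℝ) ∈ F := ht.2.1 ▸ htF 0 (by omega)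
  have h1F : (1:ℝ) ∈ F := ht.2.2.1 ▸ htF n le_rfl
  have hmemIcc : ∀ z ∈ F, 0 ≤ z ∧ z ≤ 1 := by
    intro z hz
    rcases Finset.mem_union.mp hz with h | h
    · obtain ⟨k, hk, rfl⟩ := Finset.mem_image.mp h
      exact yi_mem ht (Nat.lt_succ_iff.mp (Finset.mem_range.mp hk))
    · obtain ⟨k, hk, rfl⟩ := Finset.mem_image.mp h
      exact yi_mem hs (Nat.lt_succ_iff.mp (Finset.mem_range.mp hk))
  have hc2 : 2 ≤ F.card := by
    apply Finset.one_lt_card.mpr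
    exact ⟨0, h0F, 1, h1F, by norm_num⟩
  set c := F.card with hcdef
  set e := F.orderIsoOfFin rfl with he
  set m := c - 1 with hm
  have hc0 : 0 < c := by omega
  have hmc : m < c := by omega
  set r : ℕ → ℝ := fun j => if h : j < c then (e ⟨j, h⟩ : ℝ) else 1 with hr
  -- e at the bottom index is 0, at the top index is 1
  have hbot : (e ⟨0, hc0⟩ : ℝ) = 0 := by
    have h1 : (e ⟨0, hc0⟩ : ℝ) ≤ (e (e.symm ⟨0, h0F⟩) : ℝ) := by
      exact e.monotone (show (⟨0, hc0⟩ : Fin c) ≤ e.symm ⟨0, h0F⟩ by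
        rw [Fin.le_def]; exact Nat.zero_le _)
    rw [e.apply_symm_apply] at h1
    exact le_antisymm h1 (hmemIcc _ (e ⟨0, hc0⟩).2).1
  have htop : (e ⟨m, hmc⟩ : ℝ) = 1 := by
    have h1 : (e (e.symm ⟨1, h1F⟩) : ℝ) ≤ (e ⟨m, hmc⟩ : ℝ) := by
      apply e.monotone
      rw [Fin.le_def]
      have := (e.symm ⟨(1:ℝ), h1F⟩).isLt
      simp only [hm]
      omega
    rw [e.apply_symm_apply] at h1
    exact le_antisymm (hmemIcc _ (e ⟨m, hmc⟩).2).2 h1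
  have hrpart : IsPartitionOn 0 1 m r := by
    refine ⟨by omega, ?_, ?_, ?_⟩
    · rw [hr]; simp only [dif_pos hc0]; exact hbot
    · rw [hr]; simp only [dif_pos hmc]; exact htop
    · intro k hk
      rw [hr]
      simp only [dif_pos (show k < c by omega), dif_pos (show k + 1 < c by omega)]
      exact e.monotone (by simp [Fin.le_def])
  have key : ∀ (n₀ : ℕ) (t₀ : ℕ → ℝ), IsPartitionOn 0 1 n₀ t₀ → (∀ k ≤ n₀, t₀ k ∈ F) →
      ∃ σ : ℕ → ℕ, σ 0 = 0 ∧ σ n₀ = m ∧ (∀ k < n₀, σ k ≤ σ (k + 1)) ∧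
        ∀ k ≤ n₀, r (σ k) = t₀ k := by
    intro n₀ t₀ ht₀ ht₀F
    refine ⟨fun k => if h : k ≤ n₀ then (e.symm ⟨t₀ k, ht₀F k h⟩ : Fin c).val else m,
      ?_, ?_, ?_, ?_⟩
    · simp only [dif_pos (Nat.zero_le n₀)]
      have h1 : (⟨t₀ 0, ht₀F 0 (Nat.zero_le n₀)⟩ : F) = ⟨(0:ℝ), h0F⟩ := by
        ext; exact ht₀.2.1
      rw [h1]
      have h2 : (⟨(0:ℝ), h0F⟩ : F) = e ⟨0, hc0⟩ := by ext; exact hbot.symm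
      rw [h2, e.symm_apply_apply]
    · simp only [dif_pos (le_refl n₀)]
      have h1 : (⟨t₀ n₀, ht₀F n₀ le_rfl⟩ : F) = ⟨(1:ℝ), h1F⟩ := by
        ext; exact ht₀.2.2.1
      rw [h1]
      have h2 : (⟨(1:ℝ), h1F⟩ : F) = e ⟨m, hmc⟩ := by ext; exact htop.symm
      rw [h2, e.symm_apply_apply]
    · intro k hk
      simp only [dif_pos (show k ≤ n₀ by omega), dif_pos (show k + 1 ≤ n₀ by omega)]
      have h1 : (⟨t₀ k, ht₀F k (by omega)⟩ : F) ≤ ⟨t₀ (k + 1), ht₀F (k + 1) (by omega)⟩ :=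
        ht₀.2.2.2 k hk
      exact e.symm.monotone h1
    · intro k hk
      simp only [dif_pos hk]
      rw [hr]
      have hlt : ((e.symm ⟨t₀ k, ht₀F k hk⟩ : Fin c) : ℕ) < c := (e.symm _).isLt
      simp only [dif_pos hlt]
      have h1 : (⟨((e.symm ⟨t₀ k, ht₀F k hk⟩ : Fin c) : ℕ), hlt⟩ : Fin c)
          = e.symm ⟨t₀ k, ht₀F k hk⟩ := by ext; rfl
      rw [h1, e.apply_symm_apply]
  exact ⟨m, r, hrpart, key n t ht htF, key N s hs hsF⟩


/-- Young: for `x` continuous of finite `p`-variation and `y` continuous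
of finite `q`-variation on `[0,1]`, with `p, q ≥ 1` and `1/p + 1/q > 1`, the
Riemann–Stieltjes sums `Σ_k x_{t_k}(y_{t_{k+1}} − y_{t_k})` converge as the mesh → 0. -/
theorem young_integral_exists (x y : ℝ → ℝ) (p q : ℝ)
    (hp : 1 ≤ p) (hq : 1 ≤ q) (hpq : 1 / p + 1 / q > 1)
    (hx : ContinuousOn x (Set.Icc 0 1)) (hy : ContinuousOn y (Set.Icc 0 1))
    (hxv : FiniteVarOn x p 0 1) (hyv : FiniteVarOn y q 0 1) :
    ∃ I : ℝ, ∀ ε > 0, ∃ δ > 0, ∀ n t, IsPartitionOn 0 1 n t →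
      (∀ k < n, t (k + 1) - t k < δ) →
      |(∑ k ∈ Finset.range n, x (t k) * (y (t (k + 1)) - y (t k))) - I| < ε := by
  obtain ⟨Mx, hMx⟩ := hxv
  obtain ⟨My, hMy⟩ := hyv
  have hp0 : 0 < p := lt_of_lt_of_le one_pos hp
  have hq0 : 0 < q := lt_of_lt_of_le one_pos hq
  obtain ⟨θ, hθdef⟩ : ∃ θ : ℝ, θ = 1 / p + 1 / q := ⟨_, rfl⟩
  have hθ1 : 1 < θ := by rw [hθdef]; exact hpq
  obtain ⟨cc, hcc⟩ : ∃ c : ℝ, c = (1 + θ) / 2 := ⟨_, rfl⟩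
  have hc1 : 1 < cc := by rw [hcc]; linarith
  have hcθ : cc < θ := by rw [hcc]; linarith
  have hc0 : 0 < cc := by linarith
  obtain ⟨p', hp'def⟩ : ∃ v : ℝ, v = p * cc := ⟨_, rfl⟩
  obtain ⟨q', hq'def⟩ : ∃ v : ℝ, v = q * cc := ⟨_, rfl⟩
  have hp'0 : 0 < p' := hp'def ▸ mul_pos hp0 hc0
  have hq'0 : 0 < q' := hq'def ▸ mul_pos hq0 hc0
  have hpp' : p < p' := by rw [hp'def]; nlinarith
  have hqq' : q < q' := by rw [hq'def]; nlinarith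
  have hθ'eq : 1 / p' + 1 / q' = θ / cc := by
    rw [hp'def, hq'def, hθdef]
    field_simp
  have hθ'1 : 1 < 1 / p' + 1 / q' := by
    rw [hθ'eq, lt_div_iff₀ hc0]
    linarith
  obtain ⟨K, hK⟩ : ∃ v : ℝ, v = 2 ^ (1 / p' + 1 / q') * Zc (1 / p' + 1 / q') := ⟨_, rfl⟩
  -- smallness of the refinement bound
  have hsmall : ∀ ε > 0, ∃ η > 0,
      K * ((η ^ (p' - p) * Mx) ^ (1 / p') * (η ^ (q' - q) * My) ^ (1 / q')) < ε := by
    intro ε hε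
    set G : ℝ → ℝ :=
      fun η => K * ((η ^ (p' - p) * Mx) ^ (1 / p') * (η ^ (q' - q) * My) ^ (1 / q')) with hG
    have hin1 : ContinuousAt (fun η : ℝ => η ^ (p' - p) * Mx) 0 :=
      ((Real.continuousAt_rpow_const 0 (p' - p) (Or.inr (by linarith))).mul continuousAt_const)
    have hin2 : ContinuousAt (fun η : ℝ => η ^ (q' - q) * My) 0 :=
      ((Real.continuousAt_rpow_const 0 (q' - q) (Or.inr (by linarith))).mul continuousAt_const)
    have hcomp1 : ContinuousAt (fun η : ℝ => (η ^ (p' - p) * Mx) ^ (1 / p')) 0 :=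
      ContinuousAt.comp
        (Real.continuousAt_rpow_const _ _ (Or.inr (one_div_pos.mpr hp'0).le)) hin1
    have hcomp2 : ContinuousAt (fun η : ℝ => (η ^ (q' - q) * My) ^ (1 / q')) 0 :=
      ContinuousAt.comp
        (Real.continuousAt_rpow_const _ _ (Or.inr (one_div_pos.mpr hq'0).le)) hin2
    have hcont : ContinuousAt G 0 := continuousAt_const.mul (hcomp1.mul hcomp2)
    have hG0 : G 0 = 0 := by
      have e1 : (0:ℝ) ^ (p' - p) * Mx = 0 := by
        rw [Real.zero_rpow (sub_ne_zero.mpr (ne_of_gt hpp')), zero_mul]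
      have e2 : (0:ℝ) ^ (q' - q) * My = 0 := by
        rw [Real.zero_rpow (sub_ne_zero.mpr (ne_of_gt hqq')), zero_mul]
      rw [hG]
      simp only []
      rw [e1, e2, Real.zero_rpow (one_div_ne_zero (ne_of_gt hp'0)), zero_mul, mul_zero]
    obtain ⟨δ, hδ0, hδ⟩ := Metric.continuousAt_iff.mp hcont ε hε
    refine ⟨δ / 2, half_pos hδ0, ?_⟩
    have h2 := hδ (show dist (δ / 2) 0 < δ by
      rw [Real.dist_eq, sub_zero, abs_of_pos (half_pos hδ0)]; linarith)
    rw [Real.dist_eq, hG0, sub_zero] at h2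
    exact lt_of_le_of_lt (le_abs_self _) h2
  -- uniform continuity
  have hucx : ∀ η > 0, ∃ δ > 0, ∀ u ∈ Set.Icc (0:ℝ) 1, ∀ v ∈ Set.Icc (0:ℝ) 1,
      |u - v| < δ → |x u - x v| ≤ η := by
    intro η hη
    obtain ⟨δ, hδ0, hδ⟩ := Metric.uniformContinuousOn_iff.mp
      (isCompact_Icc.uniformContinuousOn_of_continuous hx) η hη
    exact ⟨δ, hδ0, fun u hu v hv huv =>
      le_of_lt (by rw [← Real.dist_eq]; exact hδ u hu v hv (by rwa [Real.dist_eq]))⟩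
  have hucy : ∀ η > 0, ∃ δ > 0, ∀ u ∈ Set.Icc (0:ℝ) 1, ∀ v ∈ Set.Icc (0:ℝ) 1,
      |u - v| < δ → |y u - y v| ≤ η := by
    intro η hη
    obtain ⟨δ, hδ0, hδ⟩ := Metric.uniformContinuousOn_iff.mp
      (isCompact_Icc.uniformContinuousOn_of_continuous hy) η hη
    exact ⟨δ, hδ0, fun u hu v hv huv =>
      le_of_lt (by rw [← Real.dist_eq]; exact hδ u hu v hv (by rwa [Real.dist_eq]))⟩
  -- two partitions with small mesh have close Riemann-Stieltjes sums
  have pairwise : ∀ ε > 0, ∃ δ > 0, ∀ n t, IsPartitionOn 0 1 n t →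
      (∀ k < n, t (k + 1) - t k < δ) → ∀ N s, IsPartitionOn 0 1 N s →
      (∀ k < N, s (k + 1) - s k < δ) → |RS x y n t - RS x y N s| < ε := by
    intro ε hε
    obtain ⟨η, hη0, hηb⟩ := hsmall (ε / 2) (by linarith)
    obtain ⟨δx, hδx0, hδx⟩ := hucx η hη0
    obtain ⟨δy, hδy0, hδy⟩ := hucy η hη0
    refine ⟨min δx δy, lt_min hδx0 hδy0, ?_⟩
    intro n t htp htm N s hsp hsm
    obtain ⟨m, r, hrp, ⟨σ, hσ0, hσn, hσm, hσt⟩, ⟨τ, hτ0, hτn, hτm, hτt⟩⟩ :=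
      yi_common_refine htp hsp
    have hosc : ∀ (n₀ : ℕ) (t₀ : ℕ → ℝ), IsPartitionOn 0 1 n₀ t₀ →
        (∀ k < n₀, t₀ (k + 1) - t₀ k < min δx δy) →
        (∀ k < n₀, ∀ u v : ℝ, t₀ k ≤ u → u ≤ t₀ (k + 1) → t₀ k ≤ v → v ≤ t₀ (k + 1) →
          |x u - x v| ≤ η) ∧
        (∀ k < n₀, ∀ u v : ℝ, t₀ k ≤ u → u ≤ t₀ (k + 1) → t₀ k ≤ v → v ≤ t₀ (k + 1) →
          |y u - y v| ≤ η) := by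
      intro n₀ t₀ hpart hmesh
      have hpts : ∀ k < n₀, ∀ u : ℝ, t₀ k ≤ u → u ≤ t₀ (k + 1) → u ∈ Set.Icc (0:ℝ) 1 := by
        intro k hk u h1 h2
        have ha := yi_mem hpart (le_of_lt hk)
        have hb := yi_mem hpart (Nat.succ_le_of_lt hk)
        exact ⟨le_trans ha.1 h1, le_trans h2 hb.2⟩
      constructor
      · intro k hk u v h1 h2 h3 h4
        apply hδx u (hpts k hk u h1 h2) v (hpts k hk v h3 h4)
        have hm := hmesh k hk
        have hmx : t₀ (k + 1) - t₀ k < δx := lt_of_lt_of_le hm (min_le_left _ _)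
        rw [abs_lt]
        constructor <;> linarith
      · intro k hk u v h1 h2 h3 h4
        apply hδy u (hpts k hk u h1 h2) v (hpts k hk v h3 h4)
        have hm := hmesh k hk
        have hmy : t₀ (k + 1) - t₀ k < δy := lt_of_lt_of_le hm (min_le_right _ _)
        rw [abs_lt]
        constructor <;> linarith
    obtain ⟨hoxt, hoyt⟩ := hosc n t htp htm
    obtain ⟨hoxs, hoys⟩ := hosc N s hsp hsm
    have est1 := yi_refine_est hp0 hq0 hp'0 hq'0 hθ'1 hpp'.le hqq'.le hMx hMy hη0.le hη0.le
      htp hoxt hoyt hrp σ hσ0 hσn hσm hσt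
    have est2 := yi_refine_est hp0 hq0 hp'0 hq'0 hθ'1 hpp'.le hqq'.le hMx hMy hη0.le hη0.le
      hsp hoxs hoys hrp τ hτ0 hτn hτm hτt
    have htri : |RS x y n t - RS x y N s|
        ≤ |RS x y m r - RS x y n t| + |RS x y m r - RS x y N s| := by
      rw [abs_sub_comm (RS x y m r) (RS x y n t)]
      exact abs_sub_le _ _ _
    rw [← hK] at est1 est2
    linarith
  -- the sequence of uniform partitions
  have hupart : ∀ j : ℕ, IsPartitionOn 0 1 (j + 1) (fun k => (k : ℝ) / ((j : ℝ) + 1)) := by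
    intro j
    have hj1 : (0:ℝ) < (j : ℝ) + 1 := by positivity
    refine ⟨by omega, by simp, ?_, ?_⟩
    · show ((j + 1 : ℕ) : ℝ) / ((j : ℝ) + 1) = 1
      push_cast
      rw [div_self (ne_of_gt hj1)]
    · intro k hk
      show (k : ℝ) / ((j : ℝ) + 1) ≤ ((k + 1 : ℕ) : ℝ) / ((j : ℝ) + 1)
      push_cast
      gcongr
      linarith
  have humesh : ∀ j : ℕ, ∀ δ : ℝ, 1 / ((j:ℝ) + 1) < δ →
      ∀ k, k < j + 1 → ((k + 1 : ℕ) : ℝ) / ((j : ℝ) + 1) - ((k:ℕ) : ℝ) / ((j : ℝ) + 1) < δ := by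
    intro j δ hδ k _
    have e : ((k + 1 : ℕ) : ℝ) / ((j : ℝ) + 1) - (k : ℝ) / ((j : ℝ) + 1)
        = 1 / ((j:ℝ) + 1) := by
      push_cast
      ring
    rw [e]
    exact hδ
  obtain ⟨seq, hseq⟩ : ∃ seq : ℕ → ℝ,
      seq = fun j => RS x y (j + 1) (fun k => (k : ℝ) / ((j : ℝ) + 1)) := ⟨_, rfl⟩
  have hmesh_small : ∀ δ : ℝ, 0 < δ → ∃ J : ℕ, ∀ j ≥ J, 1 / ((j:ℝ) + 1) < δ := by
    intro δ hδ
    obtain ⟨J, hJ⟩ := exists_nat_gt (1 / δ)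
    refine ⟨J, ?_⟩
    intro j hj
    have h1 : 1 / δ < (j:ℝ) + 1 := by
      refine lt_of_lt_of_le hJ ?_
      have : (J:ℝ) ≤ (j:ℝ) := by exact_mod_cast hj
      linarith
    rw [div_lt_iff₀ (by positivity : (0:ℝ) < (j:ℝ) + 1)]
    rw [div_lt_iff₀ hδ] at h1
    linarith
  have hcauchy : CauchySeq seq := by
    rw [Metric.cauchySeq_iff]
    intro ε hε
    obtain ⟨δ, hδ0, hpair⟩ := pairwise ε hε
    obtain ⟨J, hJ⟩ := hmesh_small δ hδ0
    refine ⟨J, ?_⟩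
    intro a ha b hb
    rw [Real.dist_eq, hseq]
    exact hpair (a + 1) _ (hupart a) (humesh a δ (hJ a ha))
      (b + 1) _ (hupart b) (humesh b δ (hJ b hb))
  obtain ⟨I, hI⟩ := cauchySeq_tendsto_of_complete hcauchy
  refine ⟨I, ?_⟩
  intro ε hε
  obtain ⟨δ, hδ0, hpair⟩ := pairwise (ε / 2) (by linarith)
  refine ⟨δ, hδ0, ?_⟩
  intro n t htp htm
  obtain ⟨J1, hJ1⟩ := Metric.tendsto_atTop.mp hI (ε / 2) (by linarith)
  obtain ⟨J2, hJ2⟩ := hmesh_small δ hδ0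
  obtain ⟨j0, hj0a, hj0b⟩ : ∃ j0, J1 ≤ j0 ∧ J2 ≤ j0 :=
    ⟨max J1 J2, le_max_left _ _, le_max_right _ _⟩
  have h1 := hpair n t htp htm (j0 + 1) _ (hupart j0) (humesh j0 δ (hJ2 j0 hj0b))
  have h2 := hJ1 j0 hj0a
  rw [Real.dist_eq, hseq] at h2
  have hRS : (∑ k ∈ Finset.range n, x (t k) * (y (t (k + 1)) - y (t k))) = RS x y n t := rfl
  rw [hRS]
  calc |RS x y n t - I|
      ≤ |RS x y n t - RS x y (j0 + 1) (fun k => (k : ℝ) / ((j0 : ℝ) + 1))|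
        + |RS x y (j0 + 1) (fun k => (k : ℝ) / ((j0 : ℝ) + 1)) - I| :=
        abs_sub_le _ _ _
    _ < ε / 2 + ε / 2 := add_lt_add h1 h2
    _ = ε := by ring
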